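/- Let d ∈ ℕ with d ≥ 1, α, β ∈ [0,∞) and v ∈ ℤ^d. Then 4^{−β} (λ_v)^{−β} · Σ_{k ∈ ℤ^d, ‖k‖ ≤ ‖v‖/2} 1/(λ_k)^α ≤ Σ_{k ∈ ℤ^d, ‖k‖ ≤ ‖v‖/2} 1/[(λ_k)^α (λ_{v−k})^β] ≤ 4^{β} (λ_v)^{−β} · Σ_{k ∈ ℤ^d, ‖k‖ ≤ ‖v‖/2} 1/(λ_k)^α. -/

import Mathlib

open scoped ENNReal

/-- `λ_x = 1 + x₁² + ⋯ + x_d²` for a lattice point `x ∈ ℤ^d`. -/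
noncomputable def lam {d : ℕ} (x : Fin d → ℤ) : ℝ := 1 + ∑ i, ((x i : ℝ)) ^ 2

/-- The Euclidean norm of a lattice point `x ∈ ℤ^d`. -/
noncomputable def znorm {d : ℕ} (x : Fin d → ℤ) : ℝ := Real.sqrt (∑ i, ((x i : ℝ)) ^ 2)

lemma lam_pos {d : ℕ} (x : Fin d → ℤ) : 0 < lam x := by
  unfold lam; positivity

lemma znorm_eq_norm {d : ℕ} (x : Fin d → ℤ) :
    znorm x = ‖(WithLp.equiv 2 (Fin d → ℝ)).symm (fun i => (x i : ℝ))‖ := by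
  rw [EuclideanSpace.norm_eq]
  simp [znorm, sq_abs]

lemma znorm_nonneg {d : ℕ} (x : Fin d → ℤ) : 0 ≤ znorm x := Real.sqrt_nonneg _

lemma sq_znorm {d : ℕ} (x : Fin d → ℤ) : (znorm x) ^ 2 = ∑ i, ((x i : ℝ)) ^ 2 := by
  unfold znorm
  rw [Real.sq_sqrt]
  positivity

lemma lam_eq {d : ℕ} (x : Fin d → ℤ) : lam x = 1 + (znorm x) ^ 2 := by
  rw [lam, sq_znorm]

lemma znorm_sub_le {d : ℕ} (x y : Fin d → ℤ) : znorm (x - y) ≤ znorm x + znorm y := by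
  rw [znorm_eq_norm, znorm_eq_norm, znorm_eq_norm]
  have : (WithLp.equiv 2 (Fin d → ℝ)).symm (fun i => ((x - y) i : ℝ))
      = (WithLp.equiv 2 (Fin d → ℝ)).symm (fun i => (x i : ℝ))
        - (WithLp.equiv 2 (Fin d → ℝ)).symm (fun i => (y i : ℝ)) := by
    ext i; simp
  rw [this]
  exact norm_sub_le _ _

lemma key_bounds {d : ℕ} (v k : Fin d → ℤ) (h : znorm k ≤ znorm v / 2) :
    lam v ≤ 4 * lam (v - k) ∧ lam (v - k) ≤ 4 * lam v := by
  have h1 : znorm (v - k) ≤ znorm v + znorm k := znorm_sub_le v k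
  have h2 : znorm v ≤ znorm (v - k) + znorm k := by
    have := znorm_sub_le (v - k) (0 - k)
    have e : (v - k) - (0 - k) = v := by ring
    rw [e] at this
    have e2 : znorm (0 - k) = znorm k := by
      unfold znorm; congr 1; apply Finset.sum_congr rfl; intro i _
      simp
    rw [e2] at this; exact this
  have hnv := znorm_nonneg v
  have hnk := znorm_nonneg k
  have hnw := znorm_nonneg (v - k)
  rw [lam_eq, lam_eq]
  constructor
  · nlinarith [sq_nonneg (znorm (v - k)), sq_nonneg (znorm v - 2 * znorm (v - k))]
  · nlinarith [sq_nonneg (znorm v), sq_nonneg (znorm (v - k) - 2 * znorm v)]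

/-- Two-sided bounds for discrete convolutions, first estimate:
`4^{−β} (λ_v)^{−β} Σ_{‖k‖ ≤ ‖v‖/2} (λ_k)^{−α}
  ≤ Σ_{‖k‖ ≤ ‖v‖/2} (λ_k)^{−α} (λ_{v−k})^{−β}
  ≤ 4^{β} (λ_v)^{−β} Σ_{‖k‖ ≤ ‖v‖/2} (λ_k)^{−α}`,
with the sums taken in `[0,∞]`. -/
theorem twosided_first (d : ℕ) (hd : 1 ≤ d) (α β : ℝ) (hα : 0 ≤ α) (hβ : 0 ≤ β)
    (v : Fin d → ℤ) :
    (ENNReal.ofReal ((4 : ℝ) ^ (-β) * (lam v) ^ (-β)) *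
        ∑' k : Fin d → ℤ,
          (if znorm k ≤ znorm v / 2 then ENNReal.ofReal (1 / (lam k) ^ α) else 0))
      ≤ (∑' k : Fin d → ℤ,
          (if znorm k ≤ znorm v / 2 then
            ENNReal.ofReal (1 / ((lam k) ^ α * (lam (v - k)) ^ β)) else 0))
    ∧ (∑' k : Fin d → ℤ,
          (if znorm k ≤ znorm v / 2 then
            ENNReal.ofReal (1 / ((lam k) ^ α * (lam (v - k)) ^ β)) else 0))
      ≤ ENNReal.ofReal ((4 : ℝ) ^ β * (lam v) ^ (-β)) *
        ∑' k : Fin d → ℤ,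
          (if znorm k ≤ znorm v / 2 then ENNReal.ofReal (1 / (lam k) ^ α) else 0) := by
  have hv := lam_pos v
  constructor
  · rw [← ENNReal.tsum_mul_left]
    refine ENNReal.tsum_le_tsum fun k => ?_
    by_cases h : znorm k ≤ znorm v / 2
    · simp only [h, if_true]
      have hk := lam_pos k
      have hw := lam_pos (v - k)
      have hA : (0:ℝ) < (lam k) ^ α := Real.rpow_pos_of_pos hk _
      have hB : (0:ℝ) < (lam (v - k)) ^ β := Real.rpow_pos_of_pos hw _
      rw [← ENNReal.ofReal_mul (by positivity)]
      apply ENNReal.ofReal_le_ofReal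
      have hbd : (lam (v - k)) ^ β ≤ (4 * lam v) ^ β :=
        Real.rpow_le_rpow hw.le (key_bounds v k h).2 hβ
      have e : (4:ℝ) ^ (-β) * (lam v) ^ (-β) = ((4 * lam v) ^ β)⁻¹ := by
        rw [Real.mul_rpow (by norm_num) hv.le, Real.rpow_neg (by norm_num),
          Real.rpow_neg hv.le, mul_inv]
      rw [e]
      have h4 : (0:ℝ) < (4 * lam v) ^ β := Real.rpow_pos_of_pos (by linarith) _
      have e2 : ((4 * lam v) ^ β)⁻¹ * (1 / lam k ^ α)
          = 1 / (lam k ^ α * (4 * lam v) ^ β) := by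
        field_simp
      rw [e2]
      exact one_div_le_one_div_of_le (by positivity)
        (mul_le_mul_of_nonneg_left hbd hA.le)
    · simp [h]
  · rw [← ENNReal.tsum_mul_left]
    refine ENNReal.tsum_le_tsum fun k => ?_
    by_cases h : znorm k ≤ znorm v / 2
    · simp only [h, if_true]
      have hk := lam_pos k
      have hw := lam_pos (v - k)
      have hA : (0:ℝ) < (lam k) ^ α := Real.rpow_pos_of_pos hk _
      have hB : (0:ℝ) < (lam (v - k)) ^ β := Real.rpow_pos_of_pos hw _
      rw [← ENNReal.ofReal_mul (by positivity)]
      apply ENNReal.ofReal_le_ofReal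
      have hbd : (lam v / 4) ^ β ≤ (lam (v - k)) ^ β := by
        apply Real.rpow_le_rpow (by positivity) (by linarith [(key_bounds v k h).1]) hβ
      have e : (4:ℝ) ^ β * (lam v) ^ (-β) = ((lam v / 4) ^ β)⁻¹ := by
        rw [Real.div_rpow hv.le (by norm_num), Real.rpow_neg hv.le]
        field_simp
      rw [e]
      have h4 : (0:ℝ) < (lam v / 4) ^ β := Real.rpow_pos_of_pos (by linarith) _
      have e2 : ((lam v / 4) ^ β)⁻¹ * (1 / lam k ^ α)
          = 1 / (lam k ^ α * (lam v / 4) ^ β) := by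
        field_simp
      rw [e2]
      exact one_div_le_one_div_of_le (by positivity)
        (mul_le_mul_of_nonneg_left hbd hA.le)
    · simp [h]
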